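/- Let C ⊆ ℝ^n, let f : ℝ^n → ℝ be bounded above on C, and let sequences (x^(k))_{k≥0} in C and (d^(k))_{k≥0} in ℝ^n satisfy: (i) each d^(k) is a subgradient of f at x^(k), i.e., f(y) ≥ f(x^(k)) + ⟨d^(k), y − x^(k)⟩ for all y ∈ ℝ^n; and (ii) x^(k+1) maximizes the linear functional ⟨·, d^(k)⟩ over C, i.e., x^(k+1) ∈ C and ⟨z, d^(k)⟩ ≤ ⟨x^(k+1), d^(k)⟩ for all z ∈ C. Then lim_{k→∞} ⟨x^(k+1) − x^(k), d^(k)⟩ = 0; equivalently, since x^(k+1) attains the supremum, the sequence sup_{z∈C} ⟨z − x^(k), d^(k)⟩ converges to 0. -/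
import Mathlib


open scoped RealInnerProductSpace

/-- the limiting stationarity claim of Theorem 3 (and Theorem 1) of the
paper: along the subgradient-based minorize–maximize iteration,
`⟨x^(k+1) − x^(k), d^(k)⟩ → 0`; equivalently, since `x^(k+1)` attains the supremum,
`sup_{z ∈ C} ⟨z − x^(k), d^(k)⟩ → 0`. -/
theorem stmt_6 {n : ℕ} (C : Set (EuclideanSpace ℝ (Fin n)))
    (f : EuclideanSpace ℝ (Fin n) → ℝ) (hbdd : BddAbove (f '' C))
    (x d : ℕ → EuclideanSpace ℝ (Fin n))
    (hxC : ∀ k, x k ∈ C)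
    (hsub : ∀ k, ∀ y : EuclideanSpace ℝ (Fin n), f y ≥ f (x k) + ⟪d k, y - x k⟫)
    (hmax : ∀ k, ∀ z ∈ C, ⟪z, d k⟫ ≤ ⟪x (k + 1), d k⟫) :
    Filter.Tendsto (fun k => (⟪x (k + 1) - x k, d k⟫ : ℝ)) Filter.atTop (nhds 0) ∧
      Filter.Tendsto (fun k => sSup ((fun z => (⟪z - x k, d k⟫ : ℝ)) '' C))
        Filter.atTop (nhds 0) := by
  set a : ℕ → ℝ := fun k => ⟪x (k + 1) - x k, d k⟫ with ha
  have ha0 : ∀ k, 0 ≤ a k := by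
    intro k
    have h := hmax k (x k) (hxC k)
    simp only [ha, inner_sub_left]
    linarith
  have ha_le : ∀ k, a k ≤ f (x (k + 1)) - f (x k) := by
    intro k
    have h := hsub k (x (k + 1))
    have hc : (⟪d k, x (k + 1) - x k⟫ : ℝ) = a k := real_inner_comm _ _
    simp only [ha]
    linarith [h, hc]
  obtain ⟨M, hM⟩ := hbdd
  have hbM : ∀ k, f (x k) ≤ M := fun k => hM ⟨x k, hxC k, rfl⟩
  have hmono : Monotone (fun k => f (x k)) := by
    apply monotone_nat_of_le_succ
    intro k
    have := ha_le k
    have := ha0 k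
    linarith
  have hconv : ∃ L : ℝ, Filter.Tendsto (fun k => f (x k)) Filter.atTop (nhds L) := by
    refine ⟨⨆ k, f (x k), tendsto_atTop_ciSup hmono ⟨M, ?_⟩⟩
    rintro y ⟨k, rfl⟩; exact hbM k
  obtain ⟨L, hL⟩ := hconv
  have hshift : Filter.Tendsto (fun k => f (x (k + 1))) Filter.atTop (nhds L) :=
    hL.comp (Filter.tendsto_add_atTop_nat 1)
  have hdiff : Filter.Tendsto (fun k => f (x (k + 1)) - f (x k)) Filter.atTop (nhds 0) := by
    have := hshift.sub hL
    simpa using this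
  have h1 : Filter.Tendsto a Filter.atTop (nhds 0) := by
    refine tendsto_of_tendsto_of_tendsto_of_le_of_le tendsto_const_nhds hdiff
      (fun k => ha0 k) (fun k => ha_le k)
  refine ⟨h1, ?_⟩
  have hsup : ∀ k, sSup ((fun z => (⟪z - x k, d k⟫ : ℝ)) '' C) = a k := by
    intro k
    apply IsGreatest.csSup_eq
    constructor
    · exact ⟨x (k + 1), hxC (k + 1), rfl⟩
    · rintro y ⟨z, hz, rfl⟩
      have h := hmax k z hz
      simp only [ha, inner_sub_left]
      linarith
  simpa only [funext hsup] using h1
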